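/- With f(x,ω) = (3-k)x^{2-k} + 2(2-k)ω x^{1-k} - α_k for k ∈ (-1,1), k ≠ 0, α_k > 0, and L_k(ω) the unique positive root, the function ω ↦ L_k(ω) is continuously differentiable with L_k'(ω) < 0 (strictly decreasing), and ω ↦ L_k(ω) + 2ω is strictly increasing. -/

import Mathlib

open Real

/-- If `L : ℝ → ℝ` assigns to each `ω` the unique positive root of
`f(x,ω) = (3-k)x^{2-k} + 2(2-k)ω x^{1-k} - α`, then `L` is continuously differentiable with
`L' < 0` (so `L` is strictly decreasing), and `ω ↦ L(ω) + 2ω` is strictly increasing. -/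
theorem root_function_properties (k α : ℝ) (hk : k ∈ Set.Ioo (-1:ℝ) 1) (hk0 : k ≠ 0)
    (hα : 0 < α) (L : ℝ → ℝ)
    (hL : ∀ ω : ℝ, 0 < L ω ∧
      (3 - k) * (L ω) ^ (2 - k) + 2 * (2 - k) * ω * (L ω) ^ (1 - k) - α = 0) :
    ContDiff ℝ 1 L ∧ (∀ ω : ℝ, deriv L ω < 0) ∧ StrictAnti L ∧
      StrictMono (fun ω => L ω + 2 * ω) := by
  obtain ⟨hk1, hk2⟩ := hk
  have h2k : (0:ℝ) < 2 - k := by linarith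
  have h3k : (0:ℝ) < 3 - k := by linarith
  have hden : (2:ℝ) * (2 - k) ≠ 0 := by positivity
  -- the inverse function
  set g : ℝ → ℝ := fun x => (α * x ^ (k - 1) - (3 - k) * x) / (2 * (2 - k)) with hg_def
  -- key identity : g (L ω) = ω
  have hkey : ∀ ω : ℝ, α * (L ω) ^ (k - 1) - (3 - k) * (L ω) = 2 * (2 - k) * ω := by
    intro ω
    obtain ⟨hx, heq⟩ := hL ω
    have e1 : (L ω) ^ (2 - k) * (L ω) ^ (k - 1) = L ω := by
      rw [← rpow_add hx]; norm_num
    have e2 : (L ω) ^ (1 - k) * (L ω) ^ (k - 1) = 1 := by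
      rw [← rpow_add hx]; norm_num
    have hα' : α = (3 - k) * (L ω) ^ (2 - k) + 2 * (2 - k) * ω * (L ω) ^ (1 - k) := by
      linarith
    calc α * (L ω) ^ (k - 1)
        - (3 - k) * (L ω)
        = (3 - k) * ((L ω) ^ (2 - k) * (L ω) ^ (k - 1))
          + 2 * (2 - k) * ω * ((L ω) ^ (1 - k) * (L ω) ^ (k - 1)) - (3 - k) * (L ω) := by
          rw [hα']; ring
      _ = 2 * (2 - k) * ω := by rw [e1, e2]; ring
  have hgL : ∀ ω : ℝ, g (L ω) = ω := by
    intro ω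
    rw [hg_def]
    field_simp [hkey ω]
    exact hkey ω
  -- derivative of g
  have hg_deriv : ∀ x : ℝ, 0 < x →
      HasDerivAt g ((α * ((k - 1) * x ^ (k - 2)) - (3 - k)) / (2 * (2 - k))) x := by
    intro x hx
    have h1 : HasDerivAt (fun y : ℝ => y ^ (k - 1)) ((k - 1) * x ^ (k - 1 - 1)) x :=
      Real.hasDerivAt_rpow_const (Or.inl hx.ne')
    have h2 : HasDerivAt (fun y : ℝ => α * y ^ (k - 1) - (3 - k) * y)
        (α * ((k - 1) * x ^ (k - 1 - 1)) - (3 - k) * 1) x :=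
      (h1.const_mul α).sub ((hasDerivAt_id x).const_mul (3 - k))
    have : k - 1 - 1 = k - 2 := by ring
    rw [this] at h2
    simpa using h2.div_const (2 * (2 - k))
  -- g' is negative (indeed < -1/2) at positive points
  have hg_deriv_lt : ∀ x : ℝ, 0 < x →
      (α * ((k - 1) * x ^ (k - 2)) - (3 - k)) / (2 * (2 - k)) < -(1/2) := by
    intro x hx
    have hp : (0:ℝ) < x ^ (k - 2) := rpow_pos_of_pos hx _
    have h1 : α * ((k - 1) * x ^ (k - 2)) < 0 := by
      have : k - 1 < 0 := by linarith
      have := mul_neg_of_neg_of_pos this hp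
      exact mul_neg_of_pos_of_neg hα this
    rw [div_lt_iff₀ (by positivity : (0:ℝ) < 2 * (2 - k))]
    nlinarith
  have hg_deriv_neg : ∀ x : ℝ, 0 < x →
      (α * ((k - 1) * x ^ (k - 2)) - (3 - k)) / (2 * (2 - k)) < 0 := by
    intro x hx
    have := hg_deriv_lt x hx
    linarith
  -- g strictly antitone on Ioi 0
  have hg_anti : StrictAntiOn g (Set.Ioi 0) := by
    apply strictAntiOn_of_deriv_neg (convex_Ioi 0)
    · intro x hx
      exact (hg_deriv x hx).continuousAt.continuousWithinAt
    · intro x hx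
      rw [interior_Ioi] at hx
      rw [(hg_deriv x hx).deriv]
      exact hg_deriv_neg x hx
  -- L is strictly antitone
  have hLanti : StrictAnti L := by
    intro a b hab
    by_contra h
    push_neg at h
    have h1 : g (L b) ≤ g (L a) := by
      rcases eq_or_lt_of_le h with h' | h'
      · rw [h']
      · exact (hg_anti (hL a).1 (hL b).1 h').le
    rw [hgL a, hgL b] at h1
    linarith
  -- left inverse : L (g x) = x for x > 0
  have hLg : ∀ x : ℝ, 0 < x → L (g x) = x := by
    intro x hx
    have h1 : g (L (g x)) = g x := hgL (g x)
    exact hg_anti.injOn (hL (g x)).1 hx h1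
  -- L is continuous
  have hLcont : ∀ ω : ℝ, ContinuousAt L ω := by
    intro ω
    have hmono : StrictMonoOn (fun t => -L t) Set.univ := fun a _ b _ hab =>
      neg_lt_neg (hLanti hab)
    have himg : (fun t => -L t) '' Set.univ ∈ nhds (-L ω) := by
      apply Filter.mem_of_superset (Iio_mem_nhds (neg_neg_iff_pos.mpr (hL ω).1) :
        Set.Iio (0:ℝ) ∈ nhds (-L ω))
      intro y hy
      have hy' : 0 < -y := by simpa using hy
      exact ⟨g (-y), Set.mem_univ _, by show -L (g (-y)) = y; rw [hLg _ hy']; ring⟩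
    have := hmono.continuousAt_of_image_mem_nhds Filter.univ_mem himg
    have : ContinuousAt (fun t => -(-L t)) ω := this.neg
    simpa using this
  -- derivative of L
  have hLderiv : ∀ ω : ℝ, HasDerivAt L
      (((α * ((k - 1) * (L ω) ^ (k - 2)) - (3 - k)) / (2 * (2 - k)))⁻¹) ω := by
    intro ω
    exact HasDerivAt.of_local_left_inverse (hLcont ω) (hg_deriv (L ω) (hL ω).1)
      (ne_of_lt (hg_deriv_neg (L ω) (hL ω).1)) (Filter.Eventually.of_forall hgL)
  have hinv_bounds : ∀ ω : ℝ,
      -2 < ((α * ((k - 1) * (L ω) ^ (k - 2)) - (3 - k)) / (2 * (2 - k)))⁻¹ ∧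
      ((α * ((k - 1) * (L ω) ^ (k - 2)) - (3 - k)) / (2 * (2 - k)))⁻¹ < 0 := by
    intro ω
    set y := (α * ((k - 1) * (L ω) ^ (k - 2)) - (3 - k)) / (2 * (2 - k)) with hy
    have hy1 : y < -(1/2) := hg_deriv_lt (L ω) (hL ω).1
    have hyneg : y < 0 := by linarith
    have hinvneg : y⁻¹ < 0 := inv_neg''.mpr hyneg
    constructor
    · have hmul : y * y⁻¹ = 1 := mul_inv_cancel₀ hyneg.ne
      nlinarith
    · exact hinvneg
  -- continuity of deriv L
  have hderiv_eq : deriv L = fun ω =>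
      ((α * ((k - 1) * (L ω) ^ (k - 2)) - (3 - k)) / (2 * (2 - k)))⁻¹ :=
    funext fun ω => (hLderiv ω).deriv
  have hcont_deriv : Continuous (deriv L) := by
    rw [hderiv_eq]
    rw [continuous_iff_continuousAt]
    intro ω
    have h1 : ContinuousAt (fun x : ℝ => (α * ((k - 1) * x ^ (k - 2)) - (3 - k)) / (2 * (2 - k)))
        (L ω) := by
      apply ContinuousAt.div_const
      apply ContinuousAt.sub _ continuousAt_const
      exact (continuousAt_const.mul
        (continuousAt_const.mul (Real.continuousAt_rpow_const _ _ (Or.inl (hL ω).1.ne'))))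
    exact ((h1.comp (hLcont ω)).inv₀ (ne_of_lt (hg_deriv_neg (L ω) (hL ω).1)))
  have hdiff : Differentiable ℝ L := fun ω => (hLderiv ω).differentiableAt
  refine ⟨?_, ?_, hLanti, ?_⟩
  · exact contDiff_one_iff_deriv.mpr ⟨hdiff, hcont_deriv⟩
  · intro ω
    rw [(hLderiv ω).deriv]
    exact (hinv_bounds ω).2
  · apply strictMono_of_deriv_pos
    intro ω
    have h : HasDerivAt (fun t => L t + 2 * t)
        (((α * ((k - 1) * (L ω) ^ (k - 2)) - (3 - k)) / (2 * (2 - k)))⁻¹ + 2 * 1) ω :=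
      (hLderiv ω).add ((hasDerivAt_id ω).const_mul 2)
    rw [h.deriv]
    have := (hinv_bounds ω).1
    linarith
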